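/- Let $e_2 > e_1 > 0$, $a \in \mathbb{R}$ (where $a = z - f + c$), and define $\phi : \mathbb{R} \to \mathbb{R}$ by $\phi(\delta) = e^{E(\delta)}(\delta - a)$ with $E(\delta) = -e_1 \min\{0,\delta\} - e_2 \max\{0,\delta\}$. Then $\phi$ attains its maximum over $\mathbb{R}$ at the point $\delta^* = a + 1/e_1$ if $a + 1/e_1 < 0$; at $\delta^* = a + 1/e_2$ if $a + 1/e_2 > 0$; and at $\delta^* = 0$ otherwise. -/

import Mathlib

open Real

/-- `t ≤ exp(t-1)` scaled: peak of `x ↦ exp(-(c*x))*(x-a)` is at `a + 1/c`. -/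
lemma stmt7_peak (c a x : ℝ) (hc : 0 < c) :
    exp (-(c*x)) * (x - a) ≤ exp (-(c*(a + 1/c))) * ((a + 1/c) - a) := by
  have h1 : (a + 1/c) - a = 1/c := by ring
  rw [h1]
  set t := c * (x - a) with ht
  have key : t * exp (-t) ≤ exp (-1 : ℝ) := by
    have hA := Real.add_one_le_exp (t - 1)
    have hB : exp (t - 1) = exp t * exp (-1 : ℝ) := by
      rw [← Real.exp_add]; ring_nf
    have hC : exp t * exp (-t) = 1 := by rw [← Real.exp_add]; simp
    nlinarith [Real.exp_pos (-t), Real.exp_pos t, Real.exp_pos (-1 : ℝ),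
      mul_le_mul_of_nonneg_right (hB ▸ hA) (Real.exp_pos (-t)).le]
  have h3 : exp (-(c*x)) = exp (-(c*a)) * exp (-t) := by
    rw [← Real.exp_add, ht]; ring_nf
  have h4 : exp (-(c*(a + 1/c))) = exp (-(c*a)) * exp (-1 : ℝ) := by
    rw [← Real.exp_add]
    congr 1
    field_simp
    ring
  rw [h3, h4]
  have h5 : exp (-(c*a)) * exp (-t) * (x - a) = (exp (-(c*a)) / c) * (t * exp (-t)) := by
    rw [ht]; field_simp
  have h6 : exp (-(c*a)) * exp (-1 : ℝ) * (1/c) = (exp (-(c*a)) / c) * exp (-1 : ℝ) := by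
    ring
  rw [h5, h6]
  exact mul_le_mul_of_nonneg_left key (by positivity)

lemma stmt7_aux1 (u b : ℝ) (hu : 0 ≤ u) (hb : -1 ≤ b) : b ≤ exp u * (u + b) := by
  have h1 := Real.add_one_le_exp u
  have h2 := Real.add_one_le_exp (-u)
  have h3 : exp u * exp (-u) = 1 := by rw [← Real.exp_add]; simp
  have h4 := mul_le_mul_of_nonneg_left h2 (Real.exp_pos u).le
  have h5 : 0 ≤ (b + 1) * (exp u - 1) := by
    apply mul_nonneg (by linarith)
    linarith
  nlinarith [h3, h4, h5]

lemma stmt7_aux2 (u b : ℝ) (hu : 0 ≤ u) (hb : 1 ≤ b) : exp (-u) * (u + b) ≤ b := by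
  have h1 := Real.add_one_le_exp u
  have h3 : exp u * exp (-u) = 1 := by rw [← Real.exp_add]; simp
  have h4 : u + b ≤ b * exp u := by nlinarith
  have h5 := mul_le_mul_of_nonneg_right h4 (Real.exp_pos (-u)).le
  nlinarith [h5, h3, Real.exp_pos (-u)]

/-- Proposition 2's argmax formula: with asymmetric disutility `E`, the function
`φ(δ) = e^{E(δ)} (δ - a)` attains its maximum at `a + 1/e₁` if `a + 1/e₁ < 0`,
at `a + 1/e₂` if `a + 1/e₂ > 0`, and at `0` otherwise. -/
theorem stmt7 (e1 e2 a : ℝ) (he1 : 0 < e1) (he : e1 < e2)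
    (E : ℝ → ℝ) (hE : ∀ x, E x = -e1 * min 0 x - e2 * max 0 x)
    (φ : ℝ → ℝ) (hφ : ∀ δ, φ δ = exp (E δ) * (δ - a)) :
    (a + 1 / e1 < 0 → ∀ δ, φ δ ≤ φ (a + 1 / e1)) ∧
    (0 < a + 1 / e2 → ∀ δ, φ δ ≤ φ (a + 1 / e2)) ∧
    (¬ a + 1 / e1 < 0 → ¬ 0 < a + 1 / e2 → ∀ δ, φ δ ≤ φ 0) := by
  have he2 : 0 < e2 := lt_trans he1 he
  have Eneg : ∀ x, x ≤ 0 → E x = -(e1 * x) := by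
    intro x hx
    rw [hE, min_eq_right hx, max_eq_left hx]; ring
  have Epos : ∀ x, 0 ≤ x → E x = -(e2 * x) := by
    intro x hx
    rw [hE, min_eq_left hx, max_eq_right hx]; ring
  refine ⟨?_, ?_, ?_⟩
  · -- case a + 1/e1 < 0
    intro h δ
    have hp : a + 1/e1 ≤ 0 := le_of_lt h
    have hφp : φ (a + 1/e1) = exp (-(e1 * (a + 1/e1))) * ((a + 1/e1) - a) := by
      rw [hφ, Eneg _ hp]
    rw [hφp]
    rcases le_or_gt δ 0 with hδ | hδ
    · rw [hφ, Eneg _ hδ]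
      exact stmt7_peak e1 a δ he1
    · rw [hφ, Epos _ hδ.le]
      have ha : a < 0 := by
        have : 0 < 1/e1 := by positivity
        linarith
      have hda : 0 ≤ δ - a := by linarith
      have hexp : exp (-(e2 * δ)) ≤ exp (-(e1 * δ)) := by
        apply Real.exp_le_exp.mpr
        nlinarith
      calc exp (-(e2 * δ)) * (δ - a) ≤ exp (-(e1 * δ)) * (δ - a) :=
            mul_le_mul_of_nonneg_right hexp hda
        _ ≤ exp (-(e1 * (a + 1/e1))) * ((a + 1/e1) - a) := stmt7_peak e1 a δ he1
  · -- case 0 < a + 1/e2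
    intro h δ
    have hφq : φ (a + 1/e2) = exp (-(e2 * (a + 1/e2))) * ((a + 1/e2) - a) := by
      rw [hφ, Epos _ h.le]
    rw [hφq]
    have hqpos : 0 < exp (-(e2 * (a + 1/e2))) * ((a + 1/e2) - a) := by
      have : (a + 1/e2) - a = 1/e2 := by ring
      rw [this]
      positivity
    rcases le_or_gt δ 0 with hδ | hδ
    · rw [hφ, Eneg _ hδ]
      rcases le_or_gt (δ - a) 0 with hda | hda
      · have : exp (-(e1 * δ)) * (δ - a) ≤ 0 :=
          mul_nonpos_of_nonneg_of_nonpos (Real.exp_pos _).le hda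
        linarith
      · have hexp : exp (-(e1 * δ)) ≤ exp (-(e2 * δ)) := by
          apply Real.exp_le_exp.mpr
          nlinarith
        calc exp (-(e1 * δ)) * (δ - a) ≤ exp (-(e2 * δ)) * (δ - a) :=
              mul_le_mul_of_nonneg_right hexp hda.le
          _ ≤ exp (-(e2 * (a + 1/e2))) * ((a + 1/e2) - a) := stmt7_peak e2 a δ he2
    · rw [hφ, Epos _ hδ.le]
      exact stmt7_peak e2 a δ he2
  · -- case a + 1/e1 ≥ 0 and a + 1/e2 ≤ 0
    intro h1 h2 δ
    push_neg at h1 h2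
    have hb1 : -1 ≤ e1 * a := by
      have : e1 * (a + 1/e1) ≥ 0 := mul_nonneg he1.le h1
      have he1' : e1 * (1/e1) = 1 := by field_simp
      nlinarith
    have hb2 : e2 * a ≤ -1 := by
      have : e2 * (a + 1/e2) ≤ 0 := mul_nonpos_of_nonneg_of_nonpos he2.le h2
      have he2' : e2 * (1/e2) = 1 := by field_simp
      nlinarith
    have hφ0 : φ 0 = -a := by
      rw [hφ, Eneg 0 le_rfl]
      simp
    rw [hφ0]
    rcases le_or_gt δ 0 with hδ | hδ
    · rw [hφ, Eneg _ hδ]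
      have haux := stmt7_aux1 (-(e1 * δ)) (e1 * a) (by nlinarith) hb1
      have hrw : exp (-(e1 * δ)) * (-(e1 * δ) + e1 * a) = e1 * (exp (-(e1 * δ)) * (a - δ)) := by
        ring
      rw [hrw] at haux
      have h6 : a ≤ exp (-(e1 * δ)) * (a - δ) :=
        le_of_mul_le_mul_left (by linarith) he1
      nlinarith [h6]
    · rw [hφ, Epos _ hδ.le]
      have haux := stmt7_aux2 (e2 * δ) (-(e2 * a)) (by nlinarith) (by linarith)
      have hrw : exp (-(e2 * δ)) * (e2 * δ + -(e2 * a)) = e2 * (exp (-(e2 * δ)) * (δ - a)) := by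
        ring
      rw [hrw] at haux
      have h6 : exp (-(e2 * δ)) * (δ - a) ≤ -a :=
        le_of_mul_le_mul_left (by linarith) he2
      exact h6
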